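/- arXiv:1106.2348 — 4 statements merged into one kernel-verified Lean document; each statement's English description precedes it below -/
import Mathlib

section
/- Let n ≥ 2 and let G be the anticycle on the n+3 vertices x, z_1, z_2, y_1,…,y_n, with J = I(H) the edge ideal of the induced antipath H = G \ {x}. Fix 1 ≤ i ≤ j ≤ n with (i,j) ≠ (1,1), and let I' be the sum of J^2, (x z_1 z_2 y_l : 1 ≤ l ≤ n), ( x y_k y_l z_2 : 1 ≤ k ≤ l ≤ n, (k,l) ≠ (n,n) ), ( x y_k y_l z_1 : 1 ≤ k ≤ l ≤ n, (k,l) ≠ (1,1) ), ( x y_{i'} y_{j'} y_{k'} : 1 ≤ i' ≤ j' ≤ k' ≤ n, i' + 2 ≤ k' ), and ( x^2 y_k y_l : 1 ≤ k ≤ l ≤ n, (k,l) ≠ (1,1), (k,l) strictly dictionary-smaller than (i,j) ). Then the colon ideal I' : (x^2 y_i y_j) is generated by a subset of the variables of R. -/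
set_option maxHeartbeats 1600000


open MvPolynomial

/-! The anticycle `G` on the `n+3` vertices `x, z₁, y₁, …, y_n, z₂`, realized on `Fin (n+3)`
with the cycle labeling `x = 0`, `z₁ = 1`, `y_i = i+1` (so `y_i` has index `i+2` for the
0-indexed `i : Fin n`), `z₂ = n+2`.  The non-edges of `G` are exactly the consecutive pairs
on the cycle `x ∼ z₁ ∼ y₁ ∼ ⋯ ∼ y_n ∼ z₂ ∼ x`. -/

/-- The vertex `x`. -/
def vx (n : ℕ) : Fin (n + 3) := ⟨0, by omega⟩
/-- The vertex `z₁`. -/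
def vz1 (n : ℕ) : Fin (n + 3) := ⟨1, by omega⟩
/-- The vertex `z₂`. -/
def vz2 (n : ℕ) : Fin (n + 3) := ⟨n + 2, by omega⟩
/-- The vertex `y_i` (0-indexed: `vy n i` is `y_{i+1}` of the paper). -/
def vy (n : ℕ) (i : Fin n) : Fin (n + 3) := ⟨(i : ℕ) + 2, by omega⟩

/-- The edge ideal `J = I(H)` of the induced antipath `H = G \ {x}` on the vertices
`z₁, y₁, …, y_n, z₂` (indices `1, …, n+2`): its edges are the pairs of non-consecutive
indices among `1, …, n+2`. -/
noncomputable def Jideal (K : Type*) [Field K] (n : ℕ) :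
    Ideal (MvPolynomial (Fin (n + 3)) K) :=
  Ideal.span { m | ∃ a b : Fin (n + 3),
    1 ≤ (a : ℕ) ∧ (a : ℕ) + 2 ≤ (b : ℕ) ∧ m = X a * X b }

namespace Stage3aAux

/-- The exponent of a single variable. -/
noncomputable def eV (n : ℕ) (a : Fin (n + 3)) : Fin (n + 3) →₀ ℕ := Finsupp.single a 1

/-- Exponents of the monomial generators of `J`. -/
def MJ (n : ℕ) : Set (Fin (n + 3) →₀ ℕ) :=
  { s | ∃ a b : Fin (n + 3), 1 ≤ (a : ℕ) ∧ (a : ℕ) + 2 ≤ (b : ℕ) ∧ s = eV n a + eV n b }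

def M1 (n : ℕ) : Set (Fin (n + 3) →₀ ℕ) :=
  { s | ∃ a b a' b' : Fin (n + 3), 1 ≤ (a : ℕ) ∧ (a : ℕ) + 2 ≤ (b : ℕ) ∧
      1 ≤ (a' : ℕ) ∧ (a' : ℕ) + 2 ≤ (b' : ℕ) ∧ s = eV n a + eV n b + eV n a' + eV n b' }

def M2 (n : ℕ) : Set (Fin (n + 3) →₀ ℕ) :=
  { s | ∃ l : Fin n, s = eV n (vx n) + eV n (vz1 n) + eV n (vz2 n) + eV n (vy n l) }

def M3 (n : ℕ) : Set (Fin (n + 3) →₀ ℕ) :=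
  { s | ∃ k l : Fin n, k ≤ l ∧ ¬((k : ℕ) = n - 1 ∧ (l : ℕ) = n - 1) ∧
      s = eV n (vx n) + eV n (vy n k) + eV n (vy n l) + eV n (vz2 n) }

def M4 (n : ℕ) : Set (Fin (n + 3) →₀ ℕ) :=
  { s | ∃ k l : Fin n, k ≤ l ∧ ¬((k : ℕ) = 0 ∧ (l : ℕ) = 0) ∧
      s = eV n (vx n) + eV n (vy n k) + eV n (vy n l) + eV n (vz1 n) }

def M5 (n : ℕ) : Set (Fin (n + 3) →₀ ℕ) :=
  { s | ∃ a b c : Fin n, a ≤ b ∧ b ≤ c ∧ (a : ℕ) + 2 ≤ (c : ℕ) ∧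
      s = eV n (vx n) + eV n (vy n a) + eV n (vy n b) + eV n (vy n c) }

def M6 (n : ℕ) (i j : Fin n) : Set (Fin (n + 3) →₀ ℕ) :=
  { s | ∃ k l : Fin n, k ≤ l ∧ ¬((k : ℕ) = 0 ∧ (l : ℕ) = 0) ∧
      (k < i ∨ (k = i ∧ l < j)) ∧ s = eV n (vx n) + eV n (vx n) + eV n (vy n k) + eV n (vy n l) }

def MAll (n : ℕ) (i j : Fin n) : Set (Fin (n + 3) →₀ ℕ) :=
  M1 n ∪ M2 n ∪ M3 n ∪ M4 n ∪ M5 n ∪ M6 n i j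

noncomputable def dE (n : ℕ) (i j : Fin n) : Fin (n + 3) →₀ ℕ :=
  eV n (vx n) + eV n (vx n) + eV n (vy n i) + eV n (vy n j)

/-- `v` is a variable that belongs to the colon ideal. -/
def Good (n : ℕ) (i j : Fin n) (v : Fin (n + 3)) : Prop :=
  ∃ s ∈ MAll n i j, s ≤ eV n v + dE n i j

lemma mem_MAll_M1 {n : ℕ} {i j : Fin n} {s} (h : s ∈ M1 n) : s ∈ MAll n i j :=
  Or.inl (Or.inl (Or.inl (Or.inl (Or.inl h))))
lemma mem_MAll_M2 {n : ℕ} {i j : Fin n} {s} (h : s ∈ M2 n) : s ∈ MAll n i j :=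
  Or.inl (Or.inl (Or.inl (Or.inl (Or.inr h))))
lemma mem_MAll_M3 {n : ℕ} {i j : Fin n} {s} (h : s ∈ M3 n) : s ∈ MAll n i j :=
  Or.inl (Or.inl (Or.inl (Or.inr h)))
lemma mem_MAll_M4 {n : ℕ} {i j : Fin n} {s} (h : s ∈ M4 n) : s ∈ MAll n i j :=
  Or.inl (Or.inl (Or.inr h))
lemma mem_MAll_M5 {n : ℕ} {i j : Fin n} {s} (h : s ∈ M5 n) : s ∈ MAll n i j :=
  Or.inl (Or.inr h)
lemma mem_MAll_M6 {n : ℕ} {i j : Fin n} {s} (h : s ∈ M6 n i j) : s ∈ MAll n i j :=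
  Or.inr h

lemma eV_apply (n : ℕ) (a w : Fin (n + 3)) :
    eV n a w = if (a : ℕ) = (w : ℕ) then 1 else 0 := by
  simp [eV, Finsupp.single_apply, Fin.ext_iff]

@[simp] lemma vx_val (n : ℕ) : ((vx n) : ℕ) = 0 := rfl
@[simp] lemma vz1_val (n : ℕ) : ((vz1 n) : ℕ) = 1 := rfl
@[simp] lemma vz2_val (n : ℕ) : ((vz2 n) : ℕ) = n + 2 := rfl
@[simp] lemma vy_val (n : ℕ) (l : Fin n) : ((vy n l) : ℕ) = (l : ℕ) + 2 := rfl

section GoodLemmas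

variable {n : ℕ} {i j : Fin n}

lemma good_z1 (hij : i ≤ j) (h11 : ¬((i : ℕ) = 0 ∧ (j : ℕ) = 0)) : Good n i j (vz1 n) := by
  refine ⟨eV n (vx n) + eV n (vy n i) + eV n (vy n j) + eV n (vz1 n),
    mem_MAll_M4 ⟨i, j, hij, h11, rfl⟩, Finsupp.le_def.mpr fun w => ?_⟩
  simp only [dE, Finsupp.add_apply, eV_apply, vx_val, vz1_val, vz2_val, vy_val, if_true]
  split_ifs <;> (try exact ‹False›.elim) <;> omega

lemma good_z2 (hij : i ≤ j) (hnn : ¬((i : ℕ) = n - 1 ∧ (j : ℕ) = n - 1)) :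
    Good n i j (vz2 n) := by
  refine ⟨eV n (vx n) + eV n (vy n i) + eV n (vy n j) + eV n (vz2 n),
    mem_MAll_M3 ⟨i, j, hij, hnn, rfl⟩, Finsupp.le_def.mpr fun w => ?_⟩
  simp only [dE, Finsupp.add_apply, eV_apply, vx_val, vz1_val, vz2_val, vy_val, if_true]
  split_ifs <;> (try exact ‹False›.elim) <;> omega

lemma good_y_lt (hij : i ≤ j) (l : Fin n) (hl : (l : ℕ) < (j : ℕ))
    (h0 : ¬((i : ℕ) = 0 ∧ (l : ℕ) = 0 ∧ (j : ℕ) = 1)) : Good n i j (vy n l) := by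
  have hIJ : (i : ℕ) ≤ (j : ℕ) := hij
  by_cases hli : (l : ℕ) < (i : ℕ)
  · refine ⟨eV n (vx n) + eV n (vx n) + eV n (vy n l) + eV n (vy n i),
      mem_MAll_M6 ⟨l, i, by exact Fin.le_def.mpr (by omega), by omega,
        Or.inl (Fin.lt_def.mpr hli), rfl⟩, Finsupp.le_def.mpr fun w => ?_⟩
    simp only [dE, Finsupp.add_apply, eV_apply, vx_val, vz1_val, vz2_val, vy_val, if_true]
    split_ifs <;> (try exact ‹False›.elim) <;> omega
  · by_cases h00 : (i : ℕ) = 0 ∧ (l : ℕ) = 0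
    · have hj2 : 2 ≤ (j : ℕ) := by omega
      refine ⟨eV n (vx n) + eV n (vy n i) + eV n (vy n l) + eV n (vy n j),
        mem_MAll_M5 ⟨i, l, j, Fin.le_def.mpr (by omega), Fin.le_def.mpr (by omega),
          by omega, rfl⟩, Finsupp.le_def.mpr fun w => ?_⟩
      simp only [dE, Finsupp.add_apply, eV_apply, vx_val, vz1_val, vz2_val, vy_val, if_true]
      split_ifs <;> (try exact ‹False›.elim) <;> omega
    · refine ⟨eV n (vx n) + eV n (vx n) + eV n (vy n i) + eV n (vy n l),
        mem_MAll_M6 ⟨i, l, Fin.le_def.mpr (by omega), h00,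
          Or.inr ⟨rfl, Fin.lt_def.mpr hl⟩, rfl⟩, Finsupp.le_def.mpr fun w => ?_⟩
      simp only [dE, Finsupp.add_apply, eV_apply, vx_val, vz1_val, vz2_val, vy_val, if_true]
      split_ifs <;> (try exact ‹False›.elim) <;> omega

lemma good_y_ge (hij : i ≤ j) (l : Fin n) (hl : (i : ℕ) + 2 ≤ (l : ℕ)) :
    Good n i j (vy n l) := by
  have hIJ : (i : ℕ) ≤ (j : ℕ) := hij
  rcases le_or_gt (j : ℕ) (l : ℕ) with h | h
  · refine ⟨eV n (vx n) + eV n (vy n i) + eV n (vy n j) + eV n (vy n l),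
      mem_MAll_M5 ⟨i, j, l, hij, Fin.le_def.mpr h, by omega, rfl⟩,
      Finsupp.le_def.mpr fun w => ?_⟩
    simp only [dE, Finsupp.add_apply, eV_apply, vx_val, vz1_val, vz2_val, vy_val, if_true]
    split_ifs <;> (try exact ‹False›.elim) <;> omega
  · refine ⟨eV n (vx n) + eV n (vy n i) + eV n (vy n l) + eV n (vy n j),
      mem_MAll_M5 ⟨i, l, j, Fin.le_def.mpr (by omega), Fin.le_def.mpr (by omega),
        by omega, rfl⟩, Finsupp.le_def.mpr fun w => ?_⟩
    simp only [dE, Finsupp.add_apply, eV_apply, vx_val, vz1_val, vz2_val, vy_val, if_true]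
    split_ifs <;> (try exact ‹False›.elim) <;> omega

lemma good_y_all (hij : i ≤ j) (hJI2 : (i : ℕ) + 2 ≤ (j : ℕ)) (l : Fin n) :
    Good n i j (vy n l) := by
  rcases lt_or_ge (l : ℕ) (j : ℕ) with h | h
  · exact good_y_lt hij l h (by omega)
  · exact good_y_ge hij l (by omega)

lemma good_raw (hn : 2 ≤ n) (hij : i ≤ j) (h11 : ¬((i : ℕ) = 0 ∧ (j : ℕ) = 0))
    (w : Fin (n + 3)) (h1 : 1 ≤ (w : ℕ))
    (hw : (w : ℕ) < (i : ℕ) + 2 ∨ (i : ℕ) + 4 ≤ (w : ℕ)) : Good n i j w := by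
  have hIJ : (i : ℕ) ≤ (j : ℕ) := hij
  have hin : (i : ℕ) < n := i.isLt
  have hjn : (j : ℕ) < n := j.isLt
  have hwn : (w : ℕ) < n + 3 := w.isLt
  by_cases hz1 : (w : ℕ) = 1
  · have : vz1 n = w := Fin.ext (by simp only [vz1_val]; omega)
    exact this ▸ good_z1 hij h11
  · by_cases hz2 : (w : ℕ) = n + 2
    · have : vz2 n = w := Fin.ext (by simp only [vz2_val]; omega)
      exact this ▸ good_z2 hij (by omega)
    · have h2w : 2 ≤ (w : ℕ) ∧ (w : ℕ) ≤ n + 1 := by omega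
      have hnl : (w : ℕ) - 2 < n := by omega
      have hlv : ((⟨(w : ℕ) - 2, hnl⟩ : Fin n) : ℕ) = (w : ℕ) - 2 := rfl
      have hvy : vy n ⟨(w : ℕ) - 2, hnl⟩ = w := Fin.ext (by simp only [vy_val, hlv]; omega)
      rcases hw with hw | hw
      · exact hvy ▸ good_y_lt hij _ (by rw [hlv]; omega) (by rw [hlv]; omega)
      · exact hvy ▸ good_y_ge hij _ (by rw [hlv]; omega)

lemma good_raw2 (hn : 2 ≤ n) (hij : i ≤ j) (hJI2 : (i : ℕ) + 2 ≤ (j : ℕ))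
    (w : Fin (n + 3)) (h1 : 1 ≤ (w : ℕ)) : Good n i j w := by
  have hjn : (j : ℕ) < n := j.isLt
  have hwn : (w : ℕ) < n + 3 := w.isLt
  by_cases hz1 : (w : ℕ) = 1
  · have : vz1 n = w := Fin.ext (by simp only [vz1_val]; omega)
    exact this ▸ good_z1 hij (by omega)
  · by_cases hz2 : (w : ℕ) = n + 2
    · have : vz2 n = w := Fin.ext (by simp only [vz2_val]; omega)
      exact this ▸ good_z2 hij (by omega)
    · have hnl : (w : ℕ) - 2 < n := by omega
      have hvy : vy n ⟨(w : ℕ) - 2, hnl⟩ = w := Fin.ext (by simp only [vy_val]; omega)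
      exact hvy ▸ good_y_all hij hJI2 _

end GoodLemmas

/-- The key combinatorial lemma: every generator of `I'` has, among the variables where its
exponent exceeds that of `x² y_i y_j`, one that lies in the colon ideal. -/
lemma key (n : ℕ) (hn : 2 ≤ n) (i j : Fin n) (hij : i ≤ j)
    (h11 : ¬((i : ℕ) = 0 ∧ (j : ℕ) = 0)) :
    ∀ s ∈ MAll n i j, ∃ v, Good n i j v ∧ dE n i j v < s v := by
  have hIJ : (i : ℕ) ≤ (j : ℕ) := hij
  have hin : (i : ℕ) < n := i.isLt
  have hjn : (j : ℕ) < n := j.isLt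
  rintro s (((((h1 | h2) | h3) | h4) | h5) | h6)
  · -- J² generators
    obtain ⟨a, b, a', b', ha, hab, ha', hab', rfl⟩ := h1
    have hbn : (b : ℕ) < n + 3 := b.isLt
    have hbn' : (b' : ℕ) < n + 3 := b'.isLt
    by_cases hJI : (j : ℕ) ≤ (i : ℕ) + 1
    · by_cases hA : (a : ℕ) = (i : ℕ) + 2 ∨ (a : ℕ) = (i : ℕ) + 3
      · refine ⟨b, good_raw hn hij h11 b (by omega) (by omega), ?_⟩
        simp only [dE, Finsupp.add_apply, eV_apply, vx_val, vz1_val, vz2_val, vy_val, if_true]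
        split_ifs <;> (try exact ‹False›.elim) <;> grind
      · refine ⟨a, good_raw hn hij h11 a (by omega) (by omega), ?_⟩
        simp only [dE, Finsupp.add_apply, eV_apply, vx_val, vz1_val, vz2_val, vy_val, if_true]
        split_ifs <;> (try exact ‹False›.elim) <;> grind
    · by_cases hA : (a : ℕ) = (i : ℕ) + 2 ∨ (a : ℕ) = (j : ℕ) + 2
      · by_cases hB : (b : ℕ) = (i : ℕ) + 2 ∨ (b : ℕ) = (j : ℕ) + 2
        · by_cases hA' : (a' : ℕ) = (i : ℕ) + 2 ∨ (a' : ℕ) = (j : ℕ) + 2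
          · by_cases hB' : (b' : ℕ) = (i : ℕ) + 2 ∨ (b' : ℕ) = (j : ℕ) + 2
            · refine ⟨vy n i, good_y_lt hij i (by omega) (by omega), ?_⟩
              simp only [dE, Finsupp.add_apply, eV_apply, vx_val, vz1_val, vz2_val, vy_val, if_true]
              split_ifs <;> (try exact ‹False›.elim) <;> grind
            · refine ⟨b', good_raw2 hn hij (by omega) b' (by omega), ?_⟩
              simp only [dE, Finsupp.add_apply, eV_apply, vx_val, vz1_val, vz2_val, vy_val, if_true]
              split_ifs <;> (try exact ‹False›.elim) <;> grind
          · refine ⟨a', good_raw2 hn hij (by omega) a' (by omega), ?_⟩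
            simp only [dE, Finsupp.add_apply, eV_apply, vx_val, vz1_val, vz2_val, vy_val, if_true]
            split_ifs <;> (try exact ‹False›.elim) <;> grind
        · refine ⟨b, good_raw2 hn hij (by omega) b (by omega), ?_⟩
          simp only [dE, Finsupp.add_apply, eV_apply, vx_val, vz1_val, vz2_val, vy_val, if_true]
          split_ifs <;> (try exact ‹False›.elim) <;> grind
      · refine ⟨a, good_raw2 hn hij (by omega) a (by omega), ?_⟩
        simp only [dE, Finsupp.add_apply, eV_apply, vx_val, vz1_val, vz2_val, vy_val, if_true]
        split_ifs <;> (try exact ‹False›.elim) <;> grind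
  · -- x z₁ z₂ y_l
    obtain ⟨l, rfl⟩ := h2
    refine ⟨vz1 n, good_z1 hij h11, ?_⟩
    simp only [dE, Finsupp.add_apply, eV_apply, vx_val, vz1_val, vz2_val, vy_val, if_true]
    split_ifs <;> (try exact ‹False›.elim) <;> grind
  · -- x y_k y_l z₂
    obtain ⟨k, l, hkl, hne, rfl⟩ := h3
    have hkl' : (k : ℕ) ≤ (l : ℕ) := hkl
    have hkn : (k : ℕ) < n := k.isLt
    have hln : (l : ℕ) < n := l.isLt
    by_cases hnn : (i : ℕ) = n - 1 ∧ (j : ℕ) = n - 1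
    · refine ⟨vy n k, good_y_lt hij k (by omega) (by omega), ?_⟩
      simp only [dE, Finsupp.add_apply, eV_apply, vx_val, vz1_val, vz2_val, vy_val, if_true]
      split_ifs <;> (try exact ‹False›.elim) <;> grind
    · refine ⟨vz2 n, good_z2 hij hnn, ?_⟩
      simp only [dE, Finsupp.add_apply, eV_apply, vx_val, vz1_val, vz2_val, vy_val, if_true]
      split_ifs <;> (try exact ‹False›.elim) <;> grind
  · -- x y_k y_l z₁
    obtain ⟨k, l, hkl, hne, rfl⟩ := h4
    refine ⟨vz1 n, good_z1 hij h11, ?_⟩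
    simp only [dE, Finsupp.add_apply, eV_apply, vx_val, vz1_val, vz2_val, vy_val, if_true]
    split_ifs <;> (try exact ‹False›.elim) <;> grind
  · -- x y_a y_b y_c with spread ≥ 2
    obtain ⟨a, b, c, hab, hbc, hac, rfl⟩ := h5
    have hab' : (a : ℕ) ≤ (b : ℕ) := hab
    have hbc' : (b : ℕ) ≤ (c : ℕ) := hbc
    have hcn : (c : ℕ) < n := c.isLt
    by_cases hJI : (j : ℕ) ≤ (i : ℕ) + 1
    · by_cases hc : (i : ℕ) + 2 ≤ (c : ℕ)
      · refine ⟨vy n c, good_y_ge hij c hc, ?_⟩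
        simp only [dE, Finsupp.add_apply, eV_apply, vx_val, vz1_val, vz2_val, vy_val, if_true]
        split_ifs <;> (try exact ‹False›.elim) <;> grind
      · refine ⟨vy n a, good_y_lt hij a (by omega) (by omega), ?_⟩
        simp only [dE, Finsupp.add_apply, eV_apply, vx_val, vz1_val, vz2_val, vy_val, if_true]
        split_ifs <;> (try exact ‹False›.elim) <;> grind
    · by_cases ha : (a : ℕ) = (i : ℕ) ∨ (a : ℕ) = (j : ℕ)
      · by_cases hb : (b : ℕ) = (i : ℕ) ∨ (b : ℕ) = (j : ℕ)
        · by_cases hc : (c : ℕ) = (i : ℕ) ∨ (c : ℕ) = (j : ℕ)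
          · refine ⟨vy n b, good_y_all hij (by omega) b, ?_⟩
            simp only [dE, Finsupp.add_apply, eV_apply, vx_val, vz1_val, vz2_val, vy_val, if_true]
            split_ifs <;> (try exact ‹False›.elim) <;> grind
          · refine ⟨vy n c, good_y_all hij (by omega) c, ?_⟩
            simp only [dE, Finsupp.add_apply, eV_apply, vx_val, vz1_val, vz2_val, vy_val, if_true]
            split_ifs <;> (try exact ‹False›.elim) <;> grind
        · refine ⟨vy n b, good_y_all hij (by omega) b, ?_⟩
          simp only [dE, Finsupp.add_apply, eV_apply, vx_val, vz1_val, vz2_val, vy_val, if_true]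
          split_ifs <;> (try exact ‹False›.elim) <;> grind
      · refine ⟨vy n a, good_y_all hij (by omega) a, ?_⟩
        simp only [dE, Finsupp.add_apply, eV_apply, vx_val, vz1_val, vz2_val, vy_val, if_true]
        split_ifs <;> (try exact ‹False›.elim) <;> grind
  · -- x² y_k y_l
    obtain ⟨k, l, hkl, hne, hlex, rfl⟩ := h6
    have hkl' : (k : ℕ) ≤ (l : ℕ) := hkl
    rcases hlex with hki | ⟨hk, hl⟩
    · have hki' : (k : ℕ) < (i : ℕ) := hki
      refine ⟨vy n k, good_y_lt hij k (by omega) (by omega), ?_⟩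
      simp only [dE, Finsupp.add_apply, eV_apply, vx_val, vz1_val, vz2_val, vy_val, if_true]
      split_ifs <;> (try exact ‹False›.elim) <;> grind
    · have hk' : (k : ℕ) = (i : ℕ) := by rw [hk]
      have hl' : (l : ℕ) < (j : ℕ) := hl
      refine ⟨vy n l, good_y_lt hij l hl' (by omega), ?_⟩
      simp only [dE, Finsupp.add_apply, eV_apply, vx_val, vz1_val, vz2_val, vy_val, if_true]
      split_ifs <;> (try exact ‹False›.elim) <;> grind

section IdealSide

variable (K : Type*) [Field K] (n : ℕ)

lemma X2_eq (a b : Fin (n + 3)) :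
    (X a * X b : MvPolynomial (Fin (n + 3)) K) = monomial (eV n a + eV n b) 1 := by
  simp [X, eV, monomial_mul]

lemma X4_eq (a b c d : Fin (n + 3)) :
    (X a * X b * X c * X d : MvPolynomial (Fin (n + 3)) K) =
      monomial (eV n a + eV n b + eV n c + eV n d) 1 := by
  simp [X, eV, monomial_mul]

lemma Jideal_eq :
    Jideal K n = Ideal.span ((fun s => monomial s (1 : K)) '' MJ n) := by
  unfold Jideal
  congr 1
  ext m
  constructor
  · rintro ⟨a, b, h1, h2, rfl⟩
    exact ⟨eV n a + eV n b, ⟨a, b, h1, h2, rfl⟩, (X2_eq K n a b).symm⟩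
  · rintro ⟨s, ⟨a, b, h1, h2, rfl⟩, rfl⟩
    exact ⟨a, b, h1, h2, (X2_eq K n a b).symm⟩

lemma Jsq_eq :
    Jideal K n ^ 2 = Ideal.span ((fun s => monomial s (1 : K)) '' M1 n) := by
  rw [pow_two, Jideal_eq, Ideal.span_mul_span']
  congr 1
  ext m
  constructor
  · rintro ⟨_, ⟨s1, ⟨a, b, h1, h2, rfl⟩, rfl⟩, _, ⟨s2, ⟨a', b', h1', h2', rfl⟩, rfl⟩, rfl⟩
    refine ⟨eV n a + eV n b + eV n a' + eV n b', ⟨a, b, a', b', h1, h2, h1', h2', rfl⟩, ?_⟩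
    simp [monomial_mul, add_assoc]
  · rintro ⟨s, ⟨a, b, a', b', h1, h2, h1', h2', rfl⟩, rfl⟩
    refine ⟨monomial (eV n a + eV n b) 1, ⟨eV n a + eV n b, ⟨a, b, h1, h2, rfl⟩, rfl⟩,
      monomial (eV n a' + eV n b') 1, ⟨eV n a' + eV n b', ⟨a', b', h1', h2', rfl⟩, rfl⟩, ?_⟩
    simp [monomial_mul, add_assoc]

end IdealSide

end Stage3aAux

open Stage3aAux in
/-- Fix `1 ≤ i ≤ j ≤ n` with `(i,j) ≠ (1,1)`.  With
`I' = J² + (x z₁ z₂ y_l : 1 ≤ l ≤ n) + (x y_k y_l z₂ : k ≤ l, (k,l) ≠ (n,n)) +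
(x y_k y_l z₁ : k ≤ l, (k,l) ≠ (1,1)) + (x y_{i'} y_{j'} y_{k'} : i' ≤ j' ≤ k',
i' + 2 ≤ k') + (x² y_k y_l : k ≤ l, (k,l) ≠ (1,1), (k,l)` dictionary-smaller than
`(i,j))`, the colon ideal `I' : (x² y_i y_j)` is generated by a subset of the variables.
(Indices are 0-indexed.) -/
theorem stage3a_colon (K : Type*) [Field K] (n : ℕ) (hn : 2 ≤ n) (i j : Fin n)
    (hij : i ≤ j) (h11 : ¬((i : ℕ) = 0 ∧ (j : ℕ) = 0)) :
    ∃ S : Set (Fin (n + 3)),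
      ((Jideal K n ^ 2 +
          Ideal.span { m | ∃ l : Fin n,
            m = X (vx n) * X (vz1 n) * X (vz2 n) * X (vy n l) } +
          Ideal.span { m | ∃ k l : Fin n, k ≤ l ∧
            ¬((k : ℕ) = n - 1 ∧ (l : ℕ) = n - 1) ∧
            m = X (vx n) * X (vy n k) * X (vy n l) * X (vz2 n) } +
          Ideal.span { m | ∃ k l : Fin n, k ≤ l ∧
            ¬((k : ℕ) = 0 ∧ (l : ℕ) = 0) ∧
            m = X (vx n) * X (vy n k) * X (vy n l) * X (vz1 n) } +
          Ideal.span { m | ∃ i' j' k' : Fin n, i' ≤ j' ∧ j' ≤ k' ∧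
            (i' : ℕ) + 2 ≤ (k' : ℕ) ∧
            m = X (vx n) * X (vy n i') * X (vy n j') * X (vy n k') } +
          Ideal.span { m | ∃ k l : Fin n, k ≤ l ∧
            ¬((k : ℕ) = 0 ∧ (l : ℕ) = 0) ∧
            (k < i ∨ (k = i ∧ l < j)) ∧
            m = X (vx n) * X (vx n) * X (vy n k) * X (vy n l) }).colon
        ((Ideal.span {X (vx n) * X (vx n) * X (vy n i) * X (vy n j)} :
            Ideal (MvPolynomial (Fin (n + 3)) K)) : Set (MvPolynomial (Fin (n + 3)) K))) =
      Ideal.span (MvPolynomial.X '' S) := by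
  -- rewrite `I'` as a span of monomials
  have hspan2 : Ideal.span { m : MvPolynomial (Fin (n+3)) K | ∃ l : Fin n,
      m = X (vx n) * X (vz1 n) * X (vz2 n) * X (vy n l) } =
      Ideal.span ((fun s => monomial s (1 : K)) '' M2 n) := by
    congr 1; ext m
    constructor
    · rintro ⟨l, rfl⟩
      exact ⟨_, ⟨l, rfl⟩, (X4_eq K n _ _ _ _).symm⟩
    · rintro ⟨s, ⟨l, rfl⟩, rfl⟩
      exact ⟨l, (X4_eq K n _ _ _ _).symm⟩
  have hspan3 : Ideal.span { m : MvPolynomial (Fin (n+3)) K | ∃ k l : Fin n, k ≤ l ∧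
      ¬((k : ℕ) = n - 1 ∧ (l : ℕ) = n - 1) ∧
      m = X (vx n) * X (vy n k) * X (vy n l) * X (vz2 n) } =
      Ideal.span ((fun s => monomial s (1 : K)) '' M3 n) := by
    congr 1; ext m
    constructor
    · rintro ⟨k, l, h1, h2, rfl⟩
      exact ⟨_, ⟨k, l, h1, h2, rfl⟩, (X4_eq K n _ _ _ _).symm⟩
    · rintro ⟨s, ⟨k, l, h1, h2, rfl⟩, rfl⟩
      exact ⟨k, l, h1, h2, (X4_eq K n _ _ _ _).symm⟩
  have hspan4 : Ideal.span { m : MvPolynomial (Fin (n+3)) K | ∃ k l : Fin n, k ≤ l ∧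
      ¬((k : ℕ) = 0 ∧ (l : ℕ) = 0) ∧
      m = X (vx n) * X (vy n k) * X (vy n l) * X (vz1 n) } =
      Ideal.span ((fun s => monomial s (1 : K)) '' M4 n) := by
    congr 1; ext m
    constructor
    · rintro ⟨k, l, h1, h2, rfl⟩
      exact ⟨_, ⟨k, l, h1, h2, rfl⟩, (X4_eq K n _ _ _ _).symm⟩
    · rintro ⟨s, ⟨k, l, h1, h2, rfl⟩, rfl⟩
      exact ⟨k, l, h1, h2, (X4_eq K n _ _ _ _).symm⟩
  have hspan5 : Ideal.span { m : MvPolynomial (Fin (n+3)) K | ∃ i' j' k' : Fin n,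
      i' ≤ j' ∧ j' ≤ k' ∧ (i' : ℕ) + 2 ≤ (k' : ℕ) ∧
      m = X (vx n) * X (vy n i') * X (vy n j') * X (vy n k') } =
      Ideal.span ((fun s => monomial s (1 : K)) '' M5 n) := by
    congr 1; ext m
    constructor
    · rintro ⟨a, b, c, h1, h2, h3, rfl⟩
      exact ⟨_, ⟨a, b, c, h1, h2, h3, rfl⟩, (X4_eq K n _ _ _ _).symm⟩
    · rintro ⟨s, ⟨a, b, c, h1, h2, h3, rfl⟩, rfl⟩
      exact ⟨a, b, c, h1, h2, h3, (X4_eq K n _ _ _ _).symm⟩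
  have hspan6 : Ideal.span { m : MvPolynomial (Fin (n+3)) K | ∃ k l : Fin n, k ≤ l ∧
      ¬((k : ℕ) = 0 ∧ (l : ℕ) = 0) ∧ (k < i ∨ (k = i ∧ l < j)) ∧
      m = X (vx n) * X (vx n) * X (vy n k) * X (vy n l) } =
      Ideal.span ((fun s => monomial s (1 : K)) '' M6 n i j) := by
    congr 1; ext m
    constructor
    · rintro ⟨k, l, h1, h2, h3, rfl⟩
      exact ⟨_, ⟨k, l, h1, h2, h3, rfl⟩, (X4_eq K n _ _ _ _).symm⟩
    · rintro ⟨s, ⟨k, l, h1, h2, h3, rfl⟩, rfl⟩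
      exact ⟨k, l, h1, h2, h3, (X4_eq K n _ _ _ _).symm⟩
  have hI : (Jideal K n ^ 2 +
          Ideal.span { m : MvPolynomial (Fin (n+3)) K | ∃ l : Fin n,
            m = X (vx n) * X (vz1 n) * X (vz2 n) * X (vy n l) } +
          Ideal.span { m | ∃ k l : Fin n, k ≤ l ∧
            ¬((k : ℕ) = n - 1 ∧ (l : ℕ) = n - 1) ∧
            m = X (vx n) * X (vy n k) * X (vy n l) * X (vz2 n) } +
          Ideal.span { m | ∃ k l : Fin n, k ≤ l ∧
            ¬((k : ℕ) = 0 ∧ (l : ℕ) = 0) ∧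
            m = X (vx n) * X (vy n k) * X (vy n l) * X (vz1 n) } +
          Ideal.span { m | ∃ i' j' k' : Fin n, i' ≤ j' ∧ j' ≤ k' ∧
            (i' : ℕ) + 2 ≤ (k' : ℕ) ∧
            m = X (vx n) * X (vy n i') * X (vy n j') * X (vy n k') } +
          Ideal.span { m | ∃ k l : Fin n, k ≤ l ∧
            ¬((k : ℕ) = 0 ∧ (l : ℕ) = 0) ∧
            (k < i ∨ (k = i ∧ l < j)) ∧
            m = X (vx n) * X (vx n) * X (vy n k) * X (vy n l) }) =
      Ideal.span ((fun s => monomial s (1 : K)) '' MAll n i j) := by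
    rw [Jsq_eq, hspan2, hspan3, hspan4, hspan5, hspan6, MAll]
    simp only [Set.image_union, Ideal.span_union, Ideal.add_eq_sup]
  have hf : (X (vx n) * X (vx n) * X (vy n i) * X (vy n j) : MvPolynomial (Fin (n+3)) K) =
      monomial (dE n i j) 1 := X4_eq K n _ _ _ _
  refine ⟨{ v | Good n i j v }, le_antisymm ?_ ?_⟩
  · intro p hp
    rw [Ideal.mem_colon_span_singleton, hI, mem_ideal_span_monomial_image] at hp
    rw [mem_ideal_span_X_image]
    intro m hm
    have hc : coeff (m + dE n i j) (p * (X (vx n) * X (vx n) * X (vy n i) * X (vy n j))) ≠ 0 := by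
      rw [hf, coeff_mul_monomial, mul_one]
      exact mem_support_iff.mp hm
    obtain ⟨s, hs, hle⟩ := hp _ (mem_support_iff.mpr hc)
    obtain ⟨v, hGood, hlt⟩ := key n hn i j hij h11 s hs
    refine ⟨v, hGood, ?_⟩
    have h1 := Finsupp.le_def.mp hle v
    rw [Finsupp.add_apply] at h1
    omega
  · rw [Ideal.span_le]
    rintro _ ⟨v, hv, rfl⟩
    obtain ⟨s, hs, hle⟩ := hv
    rw [SetLike.mem_coe, Ideal.mem_colon_span_singleton, hI, mem_ideal_span_monomial_image]
    intro m hm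
    have hXvf : (X v * (X (vx n) * X (vx n) * X (vy n i) * X (vy n j)) :
        MvPolynomial (Fin (n+3)) K) = monomial (eV n v + dE n i j) 1 := by
      rw [hf, X, monomial_mul, one_mul, eV]
    rw [hXvf] at hm
    classical
    rw [support_monomial, if_neg (one_ne_zero : (1 : K) ≠ 0), Finset.mem_singleton] at hm
    exact ⟨s, hs, hm ▸ hle⟩
end

section
/- Let n ≥ 2 and let G be the anticycle on the n+3 vertices x, z_1, z_2, y_1,…,y_n, with J = I(H) the edge ideal of the induced antipath H = G \ {x}. Let I' be the sum of J^2, (x z_1 z_2 y_l : 1 ≤ l ≤ n), ( x y_k y_l z_2 : 1 ≤ k ≤ l ≤ n, (k,l) ≠ (n,n) ), ( x y_k y_l z_1 : 1 ≤ k ≤ l ≤ n, (k,l) ≠ (1,1) ), ( x y_i y_j y_k : 1 ≤ i ≤ j ≤ k ≤ n, i + 2 ≤ k ), and ( x^2 y_k y_l : 1 ≤ k ≤ l ≤ n, (k,l) ≠ (1,1) ). Then the colon ideal I' : (x^2 y_1^2) equals (y_2,…,y_n, z_2); in particular it is generated by variables. -/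
open MvPolynomial

/- Auxiliary machinery: the substitution killing all variables of index `≥ 3`
(i.e. `y₂, …, y_n, z₂`), fixing `x, z₁, y₁`. -/

noncomputable def killHigh (K : Type*) [Field K] (n : ℕ) :
    MvPolynomial (Fin (n + 3)) K →ₐ[K] MvPolynomial (Fin (n + 3)) K :=
  aeval (fun i => if 3 ≤ (i : ℕ) then 0 else X i)

lemma killHigh_X_of_high (K : Type*) [Field K] (n : ℕ) {i : Fin (n + 3)}
    (hi : 3 ≤ (i : ℕ)) : killHigh K n (X i) = 0 := by
  simp [killHigh, hi]

lemma killHigh_X_of_low (K : Type*) [Field K] (n : ℕ) {i : Fin (n + 3)}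
    (hi : ¬ 3 ≤ (i : ℕ)) : killHigh K n (X i) = X i := by
  simp [killHigh, hi]

lemma sub_killHigh_mem (K : Type*) [Field K] (n : ℕ)
    (f : MvPolynomial (Fin (n + 3)) K) :
    f - killHigh K n f ∈ Ideal.span (X '' {i : Fin (n + 3) | 3 ≤ (i : ℕ)}) := by
  induction f using MvPolynomial.induction_on with
  | C a => simp [killHigh]
  | add p q hp hq =>
    rw [map_add]
    have := Ideal.add_mem _ hp hq
    convert this using 1; ring
  | mul_X p i hp =>
    rw [map_mul]
    by_cases hi : 3 ≤ (i : ℕ)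
    · rw [killHigh_X_of_high K n hi, mul_zero, sub_zero]
      exact Ideal.mul_mem_left _ _ (Ideal.subset_span ⟨i, hi, rfl⟩)
    · rw [killHigh_X_of_low K n hi]
      have := Ideal.mul_mem_right (X i) _ hp
      convert this using 1; ring

lemma vx_val (n : ℕ) : ((vx n) : ℕ) = 0 := rfl
lemma vz1_val (n : ℕ) : ((vz1 n) : ℕ) = 1 := rfl
lemma vz2_val (n : ℕ) : ((vz2 n) : ℕ) = n + 2 := rfl
lemma vy_val (n : ℕ) (i : Fin n) : ((vy n i) : ℕ) = (i : ℕ) + 2 := rfl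

/-- With
`I' = J² + (x z₁ z₂ y_l : 1 ≤ l ≤ n) + (x y_k y_l z₂ : k ≤ l, (k,l) ≠ (n,n)) +
(x y_k y_l z₁ : k ≤ l, (k,l) ≠ (1,1)) + (x y_i y_j y_k : i ≤ j ≤ k, i + 2 ≤ k) +
(x² y_k y_l : k ≤ l, (k,l) ≠ (1,1))`, the colon ideal `I' : (x² y₁²)` equals
`(y₂, …, y_n, z₂)`; in particular it is generated by variables.
(Indices are 0-indexed: `y₁` is `vy n ⟨0,_⟩` and `y₂, …, y_n` are the `vy n l` with
`0 < l`.) -/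
theorem stage3b_colon (K : Type*) [Field K] (n : ℕ) (hn : 2 ≤ n) :
    ((Jideal K n ^ 2 +
        Ideal.span { m | ∃ l : Fin n,
          m = X (vx n) * X (vz1 n) * X (vz2 n) * X (vy n l) } +
        Ideal.span { m | ∃ k l : Fin n, k ≤ l ∧
          ¬((k : ℕ) = n - 1 ∧ (l : ℕ) = n - 1) ∧
          m = X (vx n) * X (vy n k) * X (vy n l) * X (vz2 n) } +
        Ideal.span { m | ∃ k l : Fin n, k ≤ l ∧
          ¬((k : ℕ) = 0 ∧ (l : ℕ) = 0) ∧
          m = X (vx n) * X (vy n k) * X (vy n l) * X (vz1 n) } +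
        Ideal.span { m | ∃ i j k : Fin n, i ≤ j ∧ j ≤ k ∧
          (i : ℕ) + 2 ≤ (k : ℕ) ∧
          m = X (vx n) * X (vy n i) * X (vy n j) * X (vy n k) } +
        Ideal.span { m | ∃ k l : Fin n, k ≤ l ∧
          ¬((k : ℕ) = 0 ∧ (l : ℕ) = 0) ∧
          m = X (vx n) * X (vx n) * X (vy n k) * X (vy n l) }).colon
      ((Ideal.span {X (vx n) * X (vx n) * X (vy n ⟨0, by omega⟩) * X (vy n ⟨0, by omega⟩)} :
        Ideal (MvPolynomial (Fin (n + 3)) K)) : Set (MvPolynomial (Fin (n + 3)) K))) =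
    Ideal.span ({X (vz2 n)} ∪
      { m : MvPolynomial (Fin (n + 3)) K | ∃ l : Fin n, 0 < (l : ℕ) ∧ m = X (vy n l) }) := by
  have h1 : 0 < n := by omega
  set I' : Ideal (MvPolynomial (Fin (n + 3)) K) :=
      (Jideal K n ^ 2 +
        Ideal.span { m | ∃ l : Fin n,
          m = X (vx n) * X (vz1 n) * X (vz2 n) * X (vy n l) } +
        Ideal.span { m | ∃ k l : Fin n, k ≤ l ∧
          ¬((k : ℕ) = n - 1 ∧ (l : ℕ) = n - 1) ∧
          m = X (vx n) * X (vy n k) * X (vy n l) * X (vz2 n) } +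
        Ideal.span { m | ∃ k l : Fin n, k ≤ l ∧
          ¬((k : ℕ) = 0 ∧ (l : ℕ) = 0) ∧
          m = X (vx n) * X (vy n k) * X (vy n l) * X (vz1 n) } +
        Ideal.span { m | ∃ i j k : Fin n, i ≤ j ∧ j ≤ k ∧
          (i : ℕ) + 2 ≤ (k : ℕ) ∧
          m = X (vx n) * X (vy n i) * X (vy n j) * X (vy n k) } +
        Ideal.span { m | ∃ k l : Fin n, k ≤ l ∧
          ¬((k : ℕ) = 0 ∧ (l : ℕ) = 0) ∧
          m = X (vx n) * X (vx n) * X (vy n k) * X (vy n l) }) with hI'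
  have hIker : I' ≤ RingHom.ker (killHigh K n).toRingHom := by
    rw [hI']
    refine sup_le (sup_le (sup_le (sup_le (sup_le ?_ ?_) ?_) ?_) ?_) ?_
    · -- J²
      refine le_trans (Ideal.pow_le_self two_ne_zero) ?_
      rw [Jideal, Ideal.span_le]
      rintro m ⟨a, b, ha, hab, rfl⟩
      simp only [SetLike.mem_coe, RingHom.mem_ker, AlgHom.toRingHom_eq_coe, RingHom.coe_coe]
      rw [map_mul, killHigh_X_of_high K n (show 3 ≤ (b : ℕ) by omega), mul_zero]
    · rw [Ideal.span_le]
      rintro m ⟨l, rfl⟩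
      simp only [SetLike.mem_coe, RingHom.mem_ker, AlgHom.toRingHom_eq_coe, RingHom.coe_coe]
      rw [map_mul, map_mul, killHigh_X_of_high K n
        (show 3 ≤ ((vz2 n) : ℕ) by rw [vz2_val]; omega), mul_zero, zero_mul]
    · rw [Ideal.span_le]
      rintro m ⟨k, l, hkl, hne, rfl⟩
      simp only [SetLike.mem_coe, RingHom.mem_ker, AlgHom.toRingHom_eq_coe, RingHom.coe_coe]
      rw [map_mul, killHigh_X_of_high K n
        (show 3 ≤ ((vz2 n) : ℕ) by rw [vz2_val]; omega), mul_zero]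
    · rw [Ideal.span_le]
      rintro m ⟨k, l, hkl, hne, rfl⟩
      have hl1 : 1 ≤ (l : ℕ) := by
        by_contra h
        exact hne ⟨by have := Fin.le_def.mp hkl; omega, by omega⟩
      simp only [SetLike.mem_coe, RingHom.mem_ker, AlgHom.toRingHom_eq_coe, RingHom.coe_coe]
      rw [map_mul, map_mul, killHigh_X_of_high K n
        (show 3 ≤ ((vy n l) : ℕ) by rw [vy_val]; omega), mul_zero, zero_mul]
    · rw [Ideal.span_le]
      rintro m ⟨i, j, k, hij, hjk, hik, rfl⟩
      simp only [SetLike.mem_coe, RingHom.mem_ker, AlgHom.toRingHom_eq_coe, RingHom.coe_coe]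
      rw [map_mul, killHigh_X_of_high K n
        (show 3 ≤ ((vy n k) : ℕ) by rw [vy_val]; omega), mul_zero]
    · rw [Ideal.span_le]
      rintro m ⟨k, l, hkl, hne, rfl⟩
      have hl1 : 1 ≤ (l : ℕ) := by
        by_contra h
        exact hne ⟨by have := Fin.le_def.mp hkl; omega, by omega⟩
      simp only [SetLike.mem_coe, RingHom.mem_ker, AlgHom.toRingHom_eq_coe, RingHom.coe_coe]
      rw [map_mul, killHigh_X_of_high K n
        (show 3 ≤ ((vy n l) : ℕ) by rw [vy_val]; omega), mul_zero]
  apply le_antisymm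
  · -- colon ⊆ span of variables
    intro f hf
    rw [Ideal.mem_colon_span_singleton] at hf
    have h2 : killHigh K n f *
        killHigh K n (X (vx n) * X (vx n) * X (vy n ⟨0, h1⟩) * X (vy n ⟨0, h1⟩)) = 0 := by
      rw [← map_mul]
      have h3 := hIker hf
      rw [RingHom.mem_ker] at h3
      exact h3
    have hM : killHigh K n (X (vx n) * X (vx n) * X (vy n ⟨0, h1⟩) * X (vy n ⟨0, h1⟩)) =
        X (vx n) * X (vx n) * X (vy n ⟨0, h1⟩) * X (vy n ⟨0, h1⟩) := by
      have hx : ¬ 3 ≤ ((vx n) : ℕ) := by show ¬ (3 : ℕ) ≤ 0; omega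
      have hy : ¬ 3 ≤ ((vy n ⟨0, h1⟩) : ℕ) := by show ¬ (3 : ℕ) ≤ 0 + 2; omega
      rw [map_mul, map_mul, map_mul, killHigh_X_of_low K n hx, killHigh_X_of_low K n hy]
    rw [hM] at h2
    have hf0 : killHigh K n f = 0 := by
      rcases mul_eq_zero.mp h2 with h | h
      · exact h
      · exact absurd h (mul_ne_zero (mul_ne_zero (mul_ne_zero (X_ne_zero _) (X_ne_zero _))
          (X_ne_zero _)) (X_ne_zero _))
    have h4 := sub_killHigh_mem K n f
    rw [hf0, sub_zero] at h4
    refine Ideal.span_mono ?_ h4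
    rintro _ ⟨i, hi, rfl⟩
    have hi' : 3 ≤ (i : ℕ) := hi
    have hlt : (i : ℕ) < n + 3 := i.isLt
    by_cases hiz : (i : ℕ) = n + 2
    · left
      rw [Set.mem_singleton_iff]
      congr 1
      exact Fin.ext hiz
    · right
      refine ⟨⟨(i : ℕ) - 2, by omega⟩, ?_, ?_⟩
      · show 0 < (i : ℕ) - 2
        omega
      · congr 1
        apply Fin.ext
        show (i : ℕ) = (i : ℕ) - 2 + 2
        omega
  · -- span of variables ⊆ colon
    rw [Ideal.span_le]
    rintro m hm
    rw [SetLike.mem_coe, Ideal.mem_colon_span_singleton]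
    rcases hm with hm | ⟨l, hl, rfl⟩
    · rw [Set.mem_singleton_iff] at hm
      subst hm
      show (X (vz2 n) * (X (vx n) * X (vx n) * X (vy n ⟨0, h1⟩) * X (vy n ⟨0, h1⟩)) :
        MvPolynomial (Fin (n + 3)) K) ∈ I'
      have e1 : (X (vz2 n) * (X (vx n) * X (vx n) * X (vy n ⟨0, h1⟩) * X (vy n ⟨0, h1⟩)) :
          MvPolynomial (Fin (n + 3)) K) =
          X (vx n) * (X (vx n) * X (vy n ⟨0, h1⟩) * X (vy n ⟨0, h1⟩) * X (vz2 n)) := by ring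
      rw [e1, hI']
      have key : (X (vx n) * X (vy n ⟨0, h1⟩) * X (vy n ⟨0, h1⟩) * X (vz2 n) :
          MvPolynomial (Fin (n + 3)) K) ∈
          Ideal.span { m | ∃ k l : Fin n, k ≤ l ∧
            ¬((k : ℕ) = n - 1 ∧ (l : ℕ) = n - 1) ∧
            m = X (vx n) * X (vy n k) * X (vy n l) * X (vz2 n) } :=
        Ideal.subset_span ⟨⟨0, h1⟩, ⟨0, h1⟩, le_refl _,
          by intro h; have h' : (0 : ℕ) = n - 1 := h.1; omega, rfl⟩
      exact Submodule.mem_sup_left (Submodule.mem_sup_left (Submodule.mem_sup_left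
        (Submodule.mem_sup_right (Ideal.mul_mem_left _ _ key))))
    · show (X (vy n l) * (X (vx n) * X (vx n) * X (vy n ⟨0, h1⟩) * X (vy n ⟨0, h1⟩)) :
        MvPolynomial (Fin (n + 3)) K) ∈ I'
      have e2 : (X (vy n l) * (X (vx n) * X (vx n) * X (vy n ⟨0, h1⟩) * X (vy n ⟨0, h1⟩)) :
          MvPolynomial (Fin (n + 3)) K) =
          X (vy n ⟨0, h1⟩) * (X (vx n) * X (vx n) * X (vy n ⟨0, h1⟩) * X (vy n l)) := by ring
      rw [e2, hI']
      have key : (X (vx n) * X (vx n) * X (vy n ⟨0, h1⟩) * X (vy n l) :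
          MvPolynomial (Fin (n + 3)) K) ∈
          Ideal.span { m | ∃ k l : Fin n, k ≤ l ∧
            ¬((k : ℕ) = 0 ∧ (l : ℕ) = 0) ∧
            m = X (vx n) * X (vx n) * X (vy n k) * X (vy n l) } :=
        Ideal.subset_span ⟨⟨0, h1⟩, l, Fin.le_def.mpr (Nat.zero_le _),
          fun h => hl.ne' h.2, rfl⟩
      exact Submodule.mem_sup_right (Ideal.mul_mem_left _ _ key)
end

section
/- Let n ≥ 2 and let G be the anticycle on the n+3 vertices x, z_1, z_2, y_1,…,y_n. For 1 ≤ i ≤ j ≤ k ≤ n, the monomial x y_i y_j y_k belongs to I(G)^2 if and only if i + 2 ≤ k. -/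
open MvPolynomial

/-- Adjacency in the anticycle (complement of the `N`-cycle) on `Fin N`:
two distinct vertices are adjacent iff they are not consecutive on the cycle (mod `N`). -/
def anticycleAdj (N : ℕ) (a b : Fin N) : Prop :=
  a ≠ b ∧ ((a : ℕ) + 1) % N ≠ (b : ℕ) ∧ ((b : ℕ) + 1) % N ≠ (a : ℕ)

/-- The edge ideal `I(G)` of the anticycle on `Fin N`. -/
noncomputable def anticycleIdeal (K : Type*) [Field K] (N : ℕ) :
    Ideal (MvPolynomial (Fin N) K) :=
  Ideal.span { m | ∃ a b : Fin N, anticycleAdj N a b ∧ m = X a * X b }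

/-- For `1 ≤ i ≤ j ≤ k ≤ n`, the monomial `x y_i y_j y_k` belongs to
`I(G)²` if and only if `i + 2 ≤ k`.  (Indices are 0-indexed.) -/
theorem mem_anticycle_sq_iff (K : Type*) [Field K] (n : ℕ) (hn : 2 ≤ n) (i j k : Fin n)
    (hij : i ≤ j) (hjk : j ≤ k) :
    ((X (vx n) * X (vy n i) * X (vy n j) * X (vy n k) : MvPolynomial (Fin (n + 3)) K) ∈
      anticycleIdeal K (n + 3) ^ 2) ↔ (i : ℕ) + 2 ≤ (k : ℕ) := by
  classical
  have hij' : (i : ℕ) ≤ (j : ℕ) := hij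
  have hjk' : (j : ℕ) ≤ (k : ℕ) := hjk
  have hin := i.isLt
  have hkn := k.isLt
  set D : Fin (n + 3) →₀ ℕ := Finsupp.single (vx n) 1 + Finsupp.single (vy n i) 1 +
    Finsupp.single (vy n j) 1 + Finsupp.single (vy n k) 1 with hD
  have hval : ∀ p : Fin n, (vy n p : ℕ) = (p : ℕ) + 2 := fun p => rfl
  have hxval : (vx n : ℕ) = 0 := rfl
  have hnevx : ∀ p : Fin n, vx n ≠ vy n p := by
    intro p h
    have := congrArg Fin.val h
    rw [hxval, hval] at this
    omega
  have hmod : ∀ p : Fin n, ((vy n p : ℕ) + 1) % (n + 3) = (p : ℕ) + 3 := by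
    intro p
    rw [hval]
    exact Nat.mod_eq_of_lt (by have := p.isLt; omega)
  have hinj : ∀ p q : Fin n, vy n p ≠ vy n q → (p : ℕ) ≠ (q : ℕ) := by
    intro p q h hc
    exact h (by apply Fin.ext; rw [hval, hval, hc])
  have hDvx : D (vx n) = 1 := by
    rw [hD]
    simp only [Finsupp.add_apply, Finsupp.single_eq_same,
      Finsupp.single_eq_of_ne' (Ne.symm (hnevx i)), Finsupp.single_eq_of_ne' (Ne.symm (hnevx j)),
      Finsupp.single_eq_of_ne' (Ne.symm (hnevx k))]
    omega
  have hmono : (X (vx n) * X (vy n i) * X (vy n j) * X (vy n k) : MvPolynomial (Fin (n + 3)) K)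
      = monomial D 1 := by
    show monomial _ 1 * monomial _ 1 * monomial _ 1 * monomial _ 1 = _
    simp [monomial_mul, hD]
  have hsq : anticycleIdeal K (n + 3) ^ 2 =
      Ideal.span ((fun s => monomial s (1 : K)) ''
        {s | ∃ a b c d : Fin (n + 3), anticycleAdj (n + 3) a b ∧ anticycleAdj (n + 3) c d ∧
          s = Finsupp.single a 1 + Finsupp.single b 1 + Finsupp.single c 1
            + Finsupp.single d 1}) := by
    rw [pow_two, anticycleIdeal, Ideal.span_mul_span']
    congr 1
    ext m
    constructor
    · rintro ⟨p, ⟨a, b, hab, rfl⟩, q, ⟨c, d, hcd, rfl⟩, rfl⟩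
      refine ⟨_, ⟨a, b, c, d, hab, hcd, rfl⟩, ?_⟩
      show _ = X a * X b * (X c * X d)
      show _ = monomial _ 1 * monomial _ 1 * (monomial _ 1 * monomial _ 1)
      simp [monomial_mul, add_assoc]
    · rintro ⟨s, ⟨a, b, c, d, hab, hcd, rfl⟩, rfl⟩
      refine ⟨X a * X b, ⟨a, b, hab, rfl⟩, X c * X d, ⟨c, d, hcd, rfl⟩, ?_⟩
      show monomial _ 1 * monomial _ 1 * (monomial _ 1 * monomial _ 1) = _
      simp [monomial_mul, add_assoc]
  rw [hmono, hsq, mem_ideal_span_monomial_image]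
  have hsupp : (monomial D (1 : K)).support = {D} := by
    rw [support_monomial, if_neg one_ne_zero]
  rw [hsupp]
  simp only [Finset.mem_singleton, forall_eq]
  constructor
  · rintro ⟨s, ⟨a, b, c, d, hab, hcd, rfl⟩, hle⟩
    have hle' := Finsupp.le_def.mp hle
    have key : ∀ p q : Fin n, anticycleAdj (n + 3) (vy n p) (vy n q) →
        ((p : ℕ) = i ∨ (p : ℕ) = j ∨ (p : ℕ) = k) → ((q : ℕ) = i ∨ (q : ℕ) = j ∨ (q : ℕ) = k) →
        (i : ℕ) + 2 ≤ (k : ℕ) := by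
      intro p q hpq hp hq
      obtain ⟨hne, h1, h2⟩ := hpq
      have hne' := hinj _ _ hne
      rw [hmod, hval] at h1
      rw [hmod, hval] at h2
      omega
    have hmem : ∀ v : Fin (n + 3),
        1 ≤ (Finsupp.single a 1 + Finsupp.single b 1 + Finsupp.single c 1
          + Finsupp.single d 1 : Fin (n + 3) →₀ ℕ) v →
        v = vx n ∨ v = vy n i ∨ v = vy n j ∨ v = vy n k := by
      intro v hv
      have h := hle' v
      rw [hD] at h
      simp only [Finsupp.add_apply] at h hv
      by_contra hc
      push_neg at hc
      obtain ⟨h1, h2, h3, h4⟩ := hc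
      have z1 : (Finsupp.single (vx n) 1 : Fin (n + 3) →₀ ℕ) v = 0 :=
        Finsupp.single_eq_of_ne' (fun hh => h1 hh.symm)
      have z2 : (Finsupp.single (vy n i) 1 : Fin (n + 3) →₀ ℕ) v = 0 :=
        Finsupp.single_eq_of_ne' (fun hh => h2 hh.symm)
      have z3 : (Finsupp.single (vy n j) 1 : Fin (n + 3) →₀ ℕ) v = 0 :=
        Finsupp.single_eq_of_ne' (fun hh => h3 hh.symm)
      have z4 : (Finsupp.single (vy n k) 1 : Fin (n + 3) →₀ ℕ) v = 0 :=
        Finsupp.single_eq_of_ne' (fun hh => h4 hh.symm)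
      omega
    have hone : ∀ w v : Fin (n + 3), w = v →
        (Finsupp.single w 1 : Fin (n + 3) →₀ ℕ) v = 1 := by
      rintro w v rfl; exact Finsupp.single_eq_same
    have ha := hmem a (by
      simp only [Finsupp.add_apply]
      have := hone a a rfl
      omega)
    have hb := hmem b (by
      simp only [Finsupp.add_apply]
      have := hone b b rfl
      omega)
    have hc' := hmem c (by
      simp only [Finsupp.add_apply]
      have := hone c c rfl
      omega)
    have hd := hmem d (by
      simp only [Finsupp.add_apply]
      have := hone d d rfl
      omega)
    have ymem : ∀ v : Fin (n + 3), (v = vx n ∨ v = vy n i ∨ v = vy n j ∨ v = vy n k) →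
        v ≠ vx n → ∃ p : Fin n, v = vy n p ∧ ((p : ℕ) = i ∨ (p : ℕ) = j ∨ (p : ℕ) = k) := by
      rintro v (rfl | rfl | rfl | rfl) hne
      · exact absurd rfl hne
      · exact ⟨i, rfl, Or.inl rfl⟩
      · exact ⟨j, rfl, Or.inr (Or.inl rfl)⟩
      · exact ⟨k, rfl, Or.inr (Or.inr rfl)⟩
    by_cases hax : a ≠ vx n ∧ b ≠ vx n
    · obtain ⟨p, rfl, hp⟩ := ymem a ha hax.1
      obtain ⟨q, rfl, hq⟩ := ymem b hb hax.2
      exact key p q hab hp hq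
    · have hcd' : c ≠ vx n ∧ d ≠ vx n := by
        have h := hle' (vx n)
        rw [hDvx] at h
        simp only [Finsupp.add_apply] at h
        push_neg at hax
        by_cases haa : a = vx n
        · have h1 := hone a (vx n) haa
          constructor <;> intro hh
          · have h2 := hone c (vx n) hh
            omega
          · have h2 := hone d (vx n) hh
            omega
        · have h1 := hone b (vx n) (hax haa)
          constructor <;> intro hh
          · have h2 := hone c (vx n) hh
            omega
          · have h2 := hone d (vx n) hh
            omega
      obtain ⟨p, rfl, hp⟩ := ymem c hc' hcd'.1
      obtain ⟨q, rfl, hq⟩ := ymem d hd hcd'.2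
      exact key p q hcd hp hq
  · intro hk
    refine ⟨Finsupp.single (vx n) 1 + Finsupp.single (vy n j) 1 + Finsupp.single (vy n i) 1
      + Finsupp.single (vy n k) 1, ⟨vx n, vy n j, vy n i, vy n k, ?_, ?_, rfl⟩, le_of_eq ?_⟩
    · refine ⟨hnevx j, ?_, ?_⟩
      · rw [hxval, Nat.mod_eq_of_lt (show 0 + 1 < n + 3 by omega), hval]
        omega
      · rw [hmod, hxval]
        omega
    · refine ⟨?_, ?_, ?_⟩
      · intro h
        have := congrArg Fin.val h
        rw [hval, hval] at this
        omega
      · rw [hmod, hval]; omega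
      · rw [hmod, hval]; omega
    · rw [hD]; abel
end

section
/- In k[x_1,…,x_6], the colon ideal ( x_1^2 x_3^2, x_1^2 x_3 x_4, x_1 x_2 x_3 x_4, x_1^2 x_4^2, x_1 x_2 x_4^2, x_2^2 x_4^2, x_1^2 x_3 x_5, x_1 x_2 x_3 x_5, x_1 x_3^2 x_5, x_1^2 x_4 x_5, x_1 x_2 x_4 x_5, x_2^2 x_4 x_5, x_1 x_3 x_4 x_5, x_2 x_3 x_4 x_5, x_1^2 x_5^2, x_1 x_2 x_5^2, x_2^2 x_5^2, x_1 x_3 x_5^2, x_2 x_3 x_5^2, x_3^2 x_5^2 ) : (x_1 x_2 x_3 x_6) equals (x_4, x_5, x_1 x_3). In particular, this colon ideal is not generated by variables, so listing the minimal monomial generators of I(A_6)^2 in decreasing reverse-lexicographic order fails to be a linear quotients ordering at the twenty-first generator x_1 x_2 x_3 x_6. -/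
open MvPolynomial Finsupp

lemma Xm {K : Type*} [Field K] (i : Fin 6) :
    (X i : MvPolynomial (Fin 6) K) = monomial (single i 1) 1 := rfl
lemma pair_le {d : Fin 6 →₀ ℕ} (h0 : 1 ≤ d 0) (h2 : 1 ≤ d 2) :
    Finsupp.single (0 : Fin 6) 1 + Finsupp.single 2 1 ≤ d := by
  rw [Finsupp.le_def]; intro i
  rcases eq_or_ne i 0 with rfl | hi0
  · rw [Finsupp.add_apply, Finsupp.single_eq_same, Finsupp.single_eq_of_ne (by decide)]
    omega
  · rcases eq_or_ne i 2 with rfl | hi2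
    · rw [Finsupp.add_apply, Finsupp.single_eq_same, Finsupp.single_eq_of_ne (by decide)]
      omega
    · rw [Finsupp.add_apply, Finsupp.single_eq_of_ne' (Ne.symm hi0),
        Finsupp.single_eq_of_ne' (Ne.symm hi2)]
      exact Nat.zero_le _

set_option maxHeartbeats 2000000 in
/-- In `k[x₁,…,x₆]` (variables `X 0, …, X 5`), the colon ideal of the
first twenty generators of `I(A₆)²` in decreasing reverse-lexicographic order by the
twenty-first generator `x₁x₂x₃x₆` equals `(x₄, x₅, x₁x₃)`; in particular it is not
generated by variables, so the decreasing reverse-lexicographic order fails to be a linear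
quotients ordering at `x₁x₂x₃x₆`. -/
theorem revlex_fails_linear_quotients (K : Type*) [Field K] :
    ∀ Q : Ideal (MvPolynomial (Fin 6) K),
      Q = (Ideal.span
            {(X 0 ^ 2 * X 2 ^ 2 : MvPolynomial (Fin 6) K),
              X 0 ^ 2 * X 2 * X 3, X 0 * X 1 * X 2 * X 3,
              X 0 ^ 2 * X 3 ^ 2, X 0 * X 1 * X 3 ^ 2, X 1 ^ 2 * X 3 ^ 2,
              X 0 ^ 2 * X 2 * X 4, X 0 * X 1 * X 2 * X 4, X 0 * X 2 ^ 2 * X 4,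
              X 0 ^ 2 * X 3 * X 4, X 0 * X 1 * X 3 * X 4, X 1 ^ 2 * X 3 * X 4,
              X 0 * X 2 * X 3 * X 4, X 1 * X 2 * X 3 * X 4,
              X 0 ^ 2 * X 4 ^ 2, X 0 * X 1 * X 4 ^ 2, X 1 ^ 2 * X 4 ^ 2,
              X 0 * X 2 * X 4 ^ 2, X 1 * X 2 * X 4 ^ 2, X 2 ^ 2 * X 4 ^ 2}).colon
          ((Ideal.span {X 0 * X 1 * X 2 * X 5} : Ideal (MvPolynomial (Fin 6) K)) :
            Set (MvPolynomial (Fin 6) K)) →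
      Q = Ideal.span {(X 3 : MvPolynomial (Fin 6) K), X 4, X 0 * X 2} ∧
      ¬∃ S : Set (Fin 6), Q = Ideal.span (MvPolynomial.X '' S) := by
  intro Q hQ
  -- the 20 exponent vectors
  set e : Fin 6 →₀ ℕ := single 0 1 + single 1 1 + single 2 1 + single 5 1 with he
  have hI : (Ideal.span
            {(X 0 ^ 2 * X 2 ^ 2 : MvPolynomial (Fin 6) K),
              X 0 ^ 2 * X 2 * X 3, X 0 * X 1 * X 2 * X 3,
              X 0 ^ 2 * X 3 ^ 2, X 0 * X 1 * X 3 ^ 2, X 1 ^ 2 * X 3 ^ 2,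
              X 0 ^ 2 * X 2 * X 4, X 0 * X 1 * X 2 * X 4, X 0 * X 2 ^ 2 * X 4,
              X 0 ^ 2 * X 3 * X 4, X 0 * X 1 * X 3 * X 4, X 1 ^ 2 * X 3 * X 4,
              X 0 * X 2 * X 3 * X 4, X 1 * X 2 * X 3 * X 4,
              X 0 ^ 2 * X 4 ^ 2, X 0 * X 1 * X 4 ^ 2, X 1 ^ 2 * X 4 ^ 2,
              X 0 * X 2 * X 4 ^ 2, X 1 * X 2 * X 4 ^ 2, X 2 ^ 2 * X 4 ^ 2}) =
      Ideal.span ((fun s => monomial s (1 : K)) ''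
        ({single 0 2 + single 2 2,
          single 0 2 + single 2 1 + single 3 1,
          single 0 1 + single 1 1 + single 2 1 + single 3 1,
          single 0 2 + single 3 2,
          single 0 1 + single 1 1 + single 3 2,
          single 1 2 + single 3 2,
          single 0 2 + single 2 1 + single 4 1,
          single 0 1 + single 1 1 + single 2 1 + single 4 1,
          single 0 1 + single 2 2 + single 4 1,
          single 0 2 + single 3 1 + single 4 1,
          single 0 1 + single 1 1 + single 3 1 + single 4 1,
          single 1 2 + single 3 1 + single 4 1,
          single 0 1 + single 2 1 + single 3 1 + single 4 1,
          single 1 1 + single 2 1 + single 3 1 + single 4 1,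
          single 0 2 + single 4 2,
          single 0 1 + single 1 1 + single 4 2,
          single 1 2 + single 4 2,
          single 0 1 + single 2 1 + single 4 2,
          single 1 1 + single 2 1 + single 4 2,
          single 2 2 + single 4 2} : Set (Fin 6 →₀ ℕ))) := by
    congr 1
    simp only [Set.image_insert_eq, Set.image_singleton, Xm, monomial_pow, monomial_mul,
      one_pow, mul_one, smul_single, smul_eq_mul]
  have hJ : (Ideal.span {(X 3 : MvPolynomial (Fin 6) K), X 4, X 0 * X 2}) =
      Ideal.span ((fun s => monomial s (1 : K)) ''
        ({single 3 1, single 4 1, single 0 1 + single 2 1} : Set (Fin 6 →₀ ℕ))) := by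
    congr 1
    simp only [Set.image_insert_eq, Set.image_singleton, Xm, monomial_mul, mul_one]
  have hg : (X 0 * X 1 * X 2 * X 5 : MvPolynomial (Fin 6) K) = monomial e 1 := by
    simp only [Xm, monomial_mul, mul_one, he]
  have hmain : (Ideal.span
            {(X 0 ^ 2 * X 2 ^ 2 : MvPolynomial (Fin 6) K),
              X 0 ^ 2 * X 2 * X 3, X 0 * X 1 * X 2 * X 3,
              X 0 ^ 2 * X 3 ^ 2, X 0 * X 1 * X 3 ^ 2, X 1 ^ 2 * X 3 ^ 2,
              X 0 ^ 2 * X 2 * X 4, X 0 * X 1 * X 2 * X 4, X 0 * X 2 ^ 2 * X 4,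
              X 0 ^ 2 * X 3 * X 4, X 0 * X 1 * X 3 * X 4, X 1 ^ 2 * X 3 * X 4,
              X 0 * X 2 * X 3 * X 4, X 1 * X 2 * X 3 * X 4,
              X 0 ^ 2 * X 4 ^ 2, X 0 * X 1 * X 4 ^ 2, X 1 ^ 2 * X 4 ^ 2,
              X 0 * X 2 * X 4 ^ 2, X 1 * X 2 * X 4 ^ 2, X 2 ^ 2 * X 4 ^ 2}).colon
          ((Ideal.span {X 0 * X 1 * X 2 * X 5} : Ideal (MvPolynomial (Fin 6) K)) :
            Set (MvPolynomial (Fin 6) K)) =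
      Ideal.span {(X 3 : MvPolynomial (Fin 6) K), X 4, X 0 * X 2} := by
    apply le_antisymm
    · intro f hf
      rw [Ideal.mem_colon_span_singleton, hg, hI, mem_ideal_span_monomial_image] at hf
      rw [hJ, mem_ideal_span_monomial_image]
      intro d hd
      have hc : coeff (d + e) (f * monomial e (1 : K)) = coeff d f := by
        rw [coeff_mul_monomial, mul_one]
      have hmem : d + e ∈ (f * monomial e (1 : K)).support := by
        rw [MvPolynomial.mem_support_iff, hc]; exact MvPolynomial.mem_support_iff.mp hd
      obtain ⟨s, hs, hle⟩ := hf _ hmem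
      rw [Finsupp.le_def] at hle
      have h0 := hle 0; have h2 := hle 2; have h3 := hle 3; have h4 := hle 4
      simp only [Set.mem_insert_iff, Set.mem_singleton_iff] at hs
      rcases hs with rfl|rfl|rfl|rfl|rfl|rfl|rfl|rfl|rfl|rfl|rfl|rfl|rfl|rfl|rfl|rfl|rfl|rfl|rfl|rfl <;>
        simp (config := { decide := true }) only [he, Finsupp.coe_add, Pi.add_apply,
          Finsupp.single_apply, if_true, if_false] at h0 h2 h3 h4 <;>
        first
        | exact ⟨single 3 1, by simp, Finsupp.single_le_iff.mpr (by omega)⟩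
        | exact ⟨single 4 1, by simp, Finsupp.single_le_iff.mpr (by omega)⟩
        | exact ⟨single 0 1 + single 2 1, by simp, pair_le (by omega) (by omega)⟩
    · rw [Ideal.span_le]
      rintro p hp
      simp only [Set.mem_insert_iff, Set.mem_singleton_iff] at hp
      rcases hp with rfl|rfl|rfl <;> rw [SetLike.mem_coe, Ideal.mem_colon_span_singleton]
      · have h : (X 3 : MvPolynomial (Fin 6) K) * (X 0 * X 1 * X 2 * X 5)
            = (X 0 * X 1 * X 2 * X 3) * X 5 := by ring
        rw [h]; exact Ideal.mul_mem_right _ _ (Ideal.subset_span (by simp))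
      · have h : (X 4 : MvPolynomial (Fin 6) K) * (X 0 * X 1 * X 2 * X 5)
            = (X 0 * X 1 * X 2 * X 4) * X 5 := by ring
        rw [h]; exact Ideal.mul_mem_right _ _ (Ideal.subset_span (by simp))
      · have h : (X 0 * X 2 : MvPolynomial (Fin 6) K) * (X 0 * X 1 * X 2 * X 5)
            = (X 0 ^ 2 * X 2 ^ 2) * (X 1 * X 5) := by ring
        rw [h]; exact Ideal.mul_mem_right _ _ (Ideal.subset_span (by simp))
  have part1 : Q = Ideal.span {(X 3 : MvPolynomial (Fin 6) K), X 4, X 0 * X 2} :=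
    hQ.trans hmain
  refine ⟨part1, ?_⟩
  rintro ⟨S, hS⟩
  have h02 : (X 0 * X 2 : MvPolynomial (Fin 6) K) ∈ Q := by
    rw [part1]; exact Ideal.subset_span (by simp)
  have hm : (X 0 * X 2 : MvPolynomial (Fin 6) K) = monomial (single 0 1 + single 2 1) 1 := by
    simp only [Xm, monomial_mul, mul_one]
  rw [hS, mem_ideal_span_X_image] at h02
  obtain ⟨i, hiS, hi⟩ := h02 (single 0 1 + single 2 1)
    (by rw [hm, MvPolynomial.mem_support_iff, coeff_monomial, if_pos rfl]; exact one_ne_zero)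
  have hX : (X i : MvPolynomial (Fin 6) K) ∈ Q := by
    rw [hS]; exact Ideal.subset_span ⟨i, hiS, rfl⟩
  rw [part1, hJ, mem_ideal_span_monomial_image] at hX
  obtain ⟨s, hs, hle⟩ := hX (single i 1)
    (by rw [Xm, MvPolynomial.mem_support_iff, coeff_monomial, if_pos rfl]; exact one_ne_zero)
  have hi' : i = 0 ∨ i = 2 := by
    by_contra hc
    push_neg at hc
    apply hi
    rw [Finsupp.add_apply, Finsupp.single_eq_of_ne' (Ne.symm hc.1),
      Finsupp.single_eq_of_ne' (Ne.symm hc.2), add_zero]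
  simp only [Set.mem_insert_iff, Set.mem_singleton_iff] at hs
  rcases hi' with rfl | rfl <;> rcases hs with rfl | rfl | rfl
  · exact absurd (Finsupp.le_def.mp hle 3) (by simp (config := { decide := true }) [Finsupp.single_apply])
  · exact absurd (Finsupp.le_def.mp hle 4) (by simp (config := { decide := true }) [Finsupp.single_apply])
  · exact absurd (Finsupp.le_def.mp hle 2) (by simp (config := { decide := true }) [Finsupp.single_apply])
  · exact absurd (Finsupp.le_def.mp hle 3) (by simp (config := { decide := true }) [Finsupp.single_apply])
  · exact absurd (Finsupp.le_def.mp hle 4) (by simp (config := { decide := true }) [Finsupp.single_apply])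
  · exact absurd (Finsupp.le_def.mp hle 0) (by simp (config := { decide := true }) [Finsupp.single_apply])
end
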